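/- Let p ≥ 1, N ≥ 2, weights w₁,…,w_N > 0 with Σᵢ wᵢ = 1, and 0 < χ < 1. Let V : ℝ → ℝ be continuously differentiable and coercive (V(x) → +∞ as |x| → ∞), and assume the function x ↦ inf_{y∈ℝ} (w₁ V(y) + w_N V(x + y)) − log|x| is coercive on ℝ. Let Ẽ_N^p be the confined p-approximated discrete Keller–Segel energy on U = {x ∈ ℝ^N : x₁ < ⋯ < x_N}, and suppose x : [0,T*) → U (with T* ∈ (0,∞]) has differentiable coordinates and satisfies wᵢ xᵢ'(t) = −(∂Ẽ_N^p/∂xᵢ)(x(t)) for every t ∈ [0,T*) and every i. Then there exists δ > 0 such that min_{2 ≤ i ≤ N} (xᵢ(t) − xᵢ₋₁(t)) ≥ δ for all t ∈ [0,T*); in particular no two particles can collide. -/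

import Mathlib

set_option maxHeartbeats 1000000


open Real Finset Filter
open scoped ENNReal

/-- `rᵢᵖ = min_p(Δxᵢ, Δxᵢ₊₁) = ((Δxᵢ^{−p} + Δxᵢ₊₁^{−p})/2)^{−1/p}`, with the boundary
convention `r₁ᵖ = 2^{1/p} Δx₂` and `r_Nᵖ = 2^{1/p} Δx_N`, for `N = n + 2` particles
indexed from `0` to `n+1`. -/
noncomputable def rballp (p : ℝ) (n : ℕ) (x : Fin (n + 2) → ℝ) (i : Fin (n + 2)) : ℝ :=
  if i.val = 0 then (2 : ℝ) ^ (1 / p) * (x 1 - x 0)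
  else if i.val = n + 1 then (2 : ℝ) ^ (1 / p) * (x i - x (i - 1))
  else (((x i - x (i - 1)) ^ (-p) + (x (i + 1) - x i) ^ (-p)) / 2) ^ (-1 / p)

/-- The confined `p`-approximated discrete modified Keller–Segel energy with confinement
`V` and chemosensitivity `χ`:
`Ẽ_N^p(x) = Σᵢ wᵢ log(wᵢ/rᵢᵖ) + Σᵢ wᵢ V(xᵢ) + χ Σᵢ Σ_{j≠i} wᵢwⱼ log|xᵢ − xⱼ|`. -/
noncomputable def kspEnergyV (p : ℝ) (n : ℕ) (w : Fin (n + 2) → ℝ) (V : ℝ → ℝ) (χ : ℝ)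
    (x : Fin (n + 2) → ℝ) : ℝ :=
  ∑ i, w i * Real.log (w i / rballp p n x i) + ∑ i, w i * V (x i) +
    χ * ∑ i, ∑ j ∈ Finset.univ.erase i, w i * w j * Real.log |x i - x j|

lemma key1 {p a b : ℝ} (hp : 1 ≤ p) (ha : 0 < a) (hb : 0 < b) :
    ((a ^ (-p) + b ^ (-p)) / 2) ^ (-1 / p) ≤ 2 ^ (1 / p) * a := by
  have hp0 : 0 < p := lt_of_lt_of_le one_pos hp
  have hA : 0 < a ^ (-p) := Real.rpow_pos_of_pos ha _
  have hB : 0 < b ^ (-p) := Real.rpow_pos_of_pos hb _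
  have h1 : a ^ (-p) / 2 ≤ (a ^ (-p) + b ^ (-p)) / 2 := by linarith
  have hexp : -1 / p ≤ 0 := by rw [neg_div]; exact neg_nonpos.mpr (by positivity)
  have h2 : ((a ^ (-p) + b ^ (-p)) / 2) ^ (-1 / p) ≤ (a ^ (-p) / 2) ^ (-1 / p) :=
    Real.rpow_le_rpow_of_nonpos (by positivity) h1 hexp
  calc ((a ^ (-p) + b ^ (-p)) / 2) ^ (-1 / p) ≤ (a ^ (-p) / 2) ^ (-1 / p) := h2
    _ = 2 ^ (1 / p) * a := by
        rw [Real.div_rpow hA.le (by norm_num : (0:ℝ) ≤ 2)]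
        rw [← Real.rpow_mul ha.le]
        have h3 : -p * (-1 / p) = 1 := by field_simp
        rw [h3, Real.rpow_one]
        have h4 : (-1 : ℝ) / p = -(1 / p) := by ring
        rw [h4, Real.rpow_neg (by norm_num : (0:ℝ) ≤ 2)]
        field_simp


-- Fin helper lemmas
lemma fin_sub_one_val {n : ℕ} {i : Fin (n + 2)} (h : i.val ≠ 0) :
    ((i - 1 : Fin (n + 2))).val = i.val - 1 := by
  rw [Fin.coe_sub_one, if_neg (fun h0 => h (by simp [h0]))]

lemma fin_sub_one_lt {n : ℕ} {i : Fin (n + 2)} (h : i.val ≠ 0) : (i - 1) < i := by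
  rw [Fin.lt_def, fin_sub_one_val h]; omega

lemma fin_add_one_val {n : ℕ} {i : Fin (n + 2)} (h : i.val ≠ n + 1) :
    ((i + 1 : Fin (n + 2))).val = i.val + 1 := by
  rw [Fin.val_add_one, if_neg (fun h0 => h (by simp [h0]))]

lemma fin_lt_add_one {n : ℕ} {i : Fin (n + 2)} (h : i.val ≠ n + 1) : i < i + 1 := by
  rw [Fin.lt_def, fin_add_one_val h]; omega

lemma gap_pos {n : ℕ} {y : Fin (n + 2) → ℝ} (hy : StrictMono y) {i : Fin (n + 2)}
    (h : i.val ≠ 0) : 0 < y i - y (i - 1) := sub_pos.mpr (hy (fin_sub_one_lt h))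

lemma rballp_pos {p : ℝ} (hp : 1 ≤ p) {n : ℕ} {y : Fin (n + 2) → ℝ} (hy : StrictMono y)
    (i : Fin (n + 2)) : 0 < rballp p n y i := by
  have hp0 : 0 < p := lt_of_lt_of_le one_pos hp
  unfold rballp
  split_ifs with h0 h1
  · have : (0 : Fin (n+2)) < 1 := by rw [Fin.lt_def]; simp
    have := hy this
    have h2 : (0:ℝ) < 2 ^ (1/p) := Real.rpow_pos_of_pos (by norm_num) _
    nlinarith [h2, sub_pos.mpr this]
  · have := gap_pos hy h0
    have h2 : (0:ℝ) < 2 ^ (1/p) := Real.rpow_pos_of_pos (by norm_num) _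
    positivity
  · have hl := gap_pos hy h0
    have hr : 0 < y (i + 1) - y i := sub_pos.mpr (hy (fin_lt_add_one h1))
    have hA : 0 < (y i - y (i-1)) ^ (-p) := Real.rpow_pos_of_pos hl _
    have hB : 0 < (y (i+1) - y i) ^ (-p) := Real.rpow_pos_of_pos hr _
    positivity

lemma key2 {p a b : ℝ} (hp : 1 ≤ p) (ha : 0 < a) (hb : 0 < b) :
    ((a ^ (-p) + b ^ (-p)) / 2) ^ (-1 / p) ≤ 2 ^ (1 / p) * b := by
  rw [add_comm]; exact key1 hp hb ha

/-- Key comparison: `rᵢᵖ ≤ 2^{1/p} |yᵢ − yⱼ|` for every `j ≠ i`. -/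
lemma rballp_le {p : ℝ} (hp : 1 ≤ p) {n : ℕ} {y : Fin (n + 2) → ℝ} (hy : StrictMono y)
    {i j : Fin (n + 2)} (hij : j ≠ i) :
    rballp p n y i ≤ 2 ^ (1 / p) * |y i - y j| := by
  have hp0 : 0 < p := lt_of_lt_of_le one_pos hp
  have h2 : (0:ℝ) < 2 ^ (1/p) := Real.rpow_pos_of_pos (by norm_num) _
  have hmono := hy.monotone
  unfold rballp
  split_ifs with h0 h1
  · -- i = 0, so j > i
    have hi0 : i = 0 := Fin.ext h0
    have hj : (0 : Fin (n+2)) < j := by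
      rw [Fin.lt_def]; simp only [Fin.val_zero]
      exact Nat.pos_of_ne_zero (fun h => hij (Fin.ext (by simp [h, h0])))
    have h1j : (1 : Fin (n+2)) ≤ j := by
      rw [Fin.le_def]; simp only [Fin.val_one]; omega
    have hyj : y 1 ≤ y j := hmono h1j
    have habs : |y i - y j| = y j - y 0 := by
      rw [hi0, abs_sub_comm, abs_of_pos (sub_pos.mpr (hy hj))]
    rw [habs]
    have h01 : y 1 - y 0 ≤ y j - y 0 := by linarith
    nlinarith
  · -- i = last, so j < i
    have hj : j < i := by
      rcases lt_or_gt_of_ne hij with h | h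
      · exact h
      · exfalso; have hv := Fin.lt_def.mp h; have := j.isLt; omega
    have hji : j ≤ i - 1 := by
      rw [Fin.le_def, fin_sub_one_val (by omega)]
      rw [Fin.lt_def] at hj; omega
    have hyj : y j ≤ y (i - 1) := hmono hji
    have habs : |y i - y j| = y i - y j := abs_of_pos (sub_pos.mpr (hy hj))
    rw [habs]
    have := gap_pos hy (show i.val ≠ 0 by omega)
    nlinarith
  · -- interior
    have hl := gap_pos hy h0
    have hr : 0 < y (i + 1) - y i := sub_pos.mpr (hy (by rw [Fin.lt_def, fin_add_one_val h1]; omega))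
    rcases lt_or_gt_of_ne hij with h | h
    · -- j < i : use left gap
      have hji : j ≤ i - 1 := by
        rw [Fin.le_def, fin_sub_one_val h0]; have hv := Fin.lt_def.mp h; omega
      have hyj : y j ≤ y (i - 1) := hmono hji
      have habs : |y i - y j| = y i - y j := abs_of_pos (sub_pos.mpr (hy h))
      rw [habs]
      calc _ ≤ 2 ^ (1/p) * (y i - y (i-1)) := key1 hp hl hr
        _ ≤ _ := by nlinarith
    · -- j > i : use right gap
      have hji : i + 1 ≤ j := by
        rw [Fin.le_def, fin_add_one_val h1]; have hv := Fin.lt_def.mp h; omega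
      have hyj : y (i + 1) ≤ y j := hmono hji
      have habs : |y i - y j| = y j - y i := by
        rw [abs_sub_comm, abs_of_pos (sub_pos.mpr (hy h))]
      rw [habs]
      calc _ ≤ 2 ^ (1/p) * (y (i+1) - y i) := key2 hp hl hr
        _ ≤ _ := by nlinarith

lemma psi_bounded {w0 wN mV : ℝ} (h0 : 0 < w0) (hN : 0 < wN) {V : ℝ → ℝ}
    (hmV : ∀ s, mV ≤ V s)
    (hVW : Tendsto (fun t : ℝ => (⨅ z : ℝ, (w0 * V z + wN * V (t + z))) - Real.log |t|)
      (cocompact ℝ) atTop)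
    {β : ℝ} (hβ0 : 0 ≤ β) (hβ1 : β ≤ 1) :
    ∃ K : ℝ, ∀ D : ℝ, 0 < D →
      K ≤ (⨅ z : ℝ, (w0 * V z + wN * V (D + z))) - β * Real.log D := by
  set G : ℝ → ℝ := fun t => ⨅ z : ℝ, (w0 * V z + wN * V (t + z)) with hG
  have hGlb : ∀ t : ℝ, (w0 + wN) * mV ≤ G t := by
    intro t
    apply le_ciInf
    intro z
    nlinarith [hmV z, hmV (t + z)]
  have htop : Tendsto (fun t : ℝ => G t - Real.log |t|) atTop atTop := by
    have := hVW
    rw [cocompact_eq_atBot_atTop, tendsto_sup] at this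
    exact this.2
  obtain ⟨R, hR⟩ := (htop.eventually_ge_atTop 0).exists_forall_of_atTop
  refine ⟨min ((w0 + wN) * mV - Real.log (max R 1)) 0, fun D hD => ?_⟩
  have hR1 : (1:ℝ) ≤ max R 1 := le_max_right _ _
  have hlogR : 0 ≤ Real.log (max R 1) := Real.log_nonneg hR1
  rcases le_or_gt D (max R 1) with hcase | hcase
  · -- small D
    have hlogD : Real.log D ≤ Real.log (max R 1) := Real.log_le_log hD hcase
    have hβlog : β * Real.log D ≤ Real.log (max R 1) := by
      rcases le_or_gt (Real.log D) 0 with h | h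
      · nlinarith
      · nlinarith
    have := hGlb D
    have : min ((w0 + wN) * mV - Real.log (max R 1)) 0 ≤
        (w0 + wN) * mV - Real.log (max R 1) := min_le_left _ _
    nlinarith [hGlb D]
  · -- large D
    have hD1 : (1:ℝ) ≤ D := le_trans hR1 hcase.le
    have habs : |D| = D := abs_of_pos hD
    have h1 := hR D (le_trans (le_max_left R 1) hcase.le)
    rw [habs] at h1
    have hlogD : 0 ≤ Real.log D := Real.log_nonneg hD1
    have hβlog : β * Real.log D ≤ Real.log D := by nlinarith
    have : min ((w0 + wN) * mV - Real.log (max R 1)) 0 ≤ 0 := min_le_right _ _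
    nlinarith

/-- Coercivity of the energy: lower bound linear in `−log(gap)`. -/
lemma energy_lower (p : ℝ) (hp : 1 ≤ p) (n : ℕ)
    (w : Fin (n + 2) → ℝ) (hw : ∀ i, 0 < w i) (hw1 : ∑ i, w i = 1)
    (χ : ℝ) (hχ0 : 0 < χ) (hχ1 : χ < 1)
    (V : ℝ → ℝ) (mV : ℝ) (hmV : ∀ s, mV ≤ V s)
    (hVW : Tendsto
      (fun t : ℝ => (⨅ y : ℝ, (w 0 * V y + w (Fin.last (n + 1)) * V (t + y))) -
        Real.log |t|) (cocompact ℝ) atTop) :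
    ∃ a C : ℝ, 0 < a ∧ ∀ y : Fin (n + 2) → ℝ, StrictMono y →
      ∀ i : Fin (n + 2), i.val ≠ 0 →
        C - a * Real.log (y i - y (i - 1)) ≤ kspEnergyV p n w V χ y := by
  have hp0 : 0 < p := lt_of_lt_of_le one_pos hp
  have h2p : (0:ℝ) < 2 ^ (1/p) := Real.rpow_pos_of_pos (by norm_num) _
  set c2 : ℝ := (1/p) * Real.log 2 with hc2def
  have hc2 : 0 ≤ c2 := by
    have : 0 ≤ Real.log 2 := Real.log_nonneg (by norm_num)
    positivity
  have hwle : ∀ i, w i ≤ 1 := by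
    intro i
    rw [← hw1]
    exact Finset.single_le_sum (fun j _ => (hw j).le) (Finset.mem_univ i)
  -- the coefficients a i
  set a : Fin (n+2) → ℝ := fun i => w i * (1 - χ * (1 - w i)) with hadef
  have ha : ∀ i, 0 < a i := by
    intro i
    have h1 : 0 ≤ 1 - w i := by linarith [hwle i]
    have h2 : χ * (1 - w i) < 1 := by nlinarith [hw i]
    have := hw i
    simp only [hadef]
    nlinarith
  have hale : ∀ i, a i ≤ w i := by
    intro i
    have h1 : 0 ≤ 1 - w i := by linarith [hwle i]
    have := hw i
    simp only [hadef]
    nlinarith [mul_nonneg hχ0.le h1, mul_nonneg (mul_nonneg hχ0.le h1) (hw i).le]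
  set A : ℝ := ∑ i, a i with hAdef
  have hA1 : A ≤ 1 := by
    rw [hAdef, ← hw1]
    exact Finset.sum_le_sum (fun i _ => hale i)
  obtain ⟨i₁, -, hi₁⟩ := Finset.exists_min_image Finset.univ a ⟨0, Finset.mem_univ 0⟩
  set astar : ℝ := a i₁ with hastardef
  have hastar_pos : 0 < astar := ha i₁
  have hastar_le : ∀ i, astar ≤ a i := fun i => hi₁ i (Finset.mem_univ i)
  have hastarA : astar ≤ A := by
    rw [hAdef]
    calc astar ≤ a i₁ := le_rfl
      _ ≤ ∑ i, a i := Finset.single_le_sum (fun j _ => (ha j).le) (Finset.mem_univ i₁)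
  have hβ0 : 0 ≤ A - astar := by linarith
  have hβ1 : A - astar ≤ 1 := by linarith
  obtain ⟨K, hK⟩ := psi_bounded (hw 0) (hw (Fin.last (n+1))) hmV hVW hβ0 hβ1
  refine ⟨astar, (∑ i, w i * Real.log (w i)) - χ * c2 - A * c2 + K + min mV 0,
    hastar_pos, ?_⟩
  intro y hy i₀ hi₀
  have hr : ∀ i : Fin (n+2), 0 < rballp p n y i := fun i => rballp_pos hp hy i
  have hyinj := hy.injective
  have hlog2p : Real.log ((2:ℝ) ^ (1/p)) = c2 := Real.log_rpow (by norm_num) _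
  have hlogle : ∀ i j : Fin (n+2), j ≠ i →
      Real.log ((rballp p n y i)) - c2 ≤ Real.log |y i - y j| := by
    intro i j hij
    have habs : 0 < |y i - y j| :=
      abs_pos.mpr (sub_ne_zero.mpr (fun h => hij (hyinj h).symm))
    have h1 : (rballp p n y i) ≤ 2 ^ (1/p) * |y i - y j| := rballp_le hp hy hij
    have h2 := Real.log_le_log (hr i) h1
    rw [Real.log_mul (ne_of_gt h2p) (ne_of_gt habs), hlog2p] at h2
    linarith
  have hI : ∑ i, (w i * (1 - w i)) * (Real.log ((rballp p n y i)) - c2) ≤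
      ∑ i, ∑ j ∈ Finset.univ.erase i, w i * w j * Real.log |y i - y j| := by
    apply Finset.sum_le_sum
    intro i _
    have hsum : ∑ j ∈ Finset.univ.erase i, w j = 1 - w i := by
      rw [Finset.sum_erase_eq_sub (Finset.mem_univ i), hw1]
    calc (w i * (1 - w i)) * (Real.log ((rballp p n y i)) - c2)
        = ∑ j ∈ Finset.univ.erase i, (w i * (Real.log ((rballp p n y i)) - c2)) * w j := by
          rw [← Finset.mul_sum, hsum]; ring
      _ ≤ ∑ j ∈ Finset.univ.erase i, w i * w j * Real.log |y i - y j| := by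
          apply Finset.sum_le_sum
          intro j hj
          have hij : j ≠ i := (Finset.mem_erase.mp hj).1
          have hwij : 0 ≤ w i * w j := mul_nonneg (hw i).le (hw j).le
          calc (w i * (Real.log ((rballp p n y i)) - c2)) * w j
              = (w i * w j) * (Real.log ((rballp p n y i)) - c2) := by ring
            _ ≤ (w i * w j) * Real.log |y i - y j| :=
                mul_le_mul_of_nonneg_left (hlogle i j hij) hwij
            _ = w i * w j * Real.log |y i - y j| := by ring
  have hS : ∑ i, w i * Real.log (w i / (rballp p n y i))
      = ∑ i, w i * Real.log (w i) - ∑ i, w i * Real.log ((rballp p n y i)) := by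
    rw [← Finset.sum_sub_distrib]
    apply Finset.sum_congr rfl
    intro i _
    rw [Real.log_div (ne_of_gt (hw i)) (ne_of_gt (hr i))]
    ring
  set D : ℝ := y (Fin.last (n+1)) - y 0 with hDdef
  have hlast0 : (0 : Fin (n+2)) < Fin.last (n+1) := by rw [Fin.lt_def]; simp
  have hD : 0 < D := sub_pos.mpr (hy hlast0)
  have hyD : ∀ i j : Fin (n+2), |y i - y j| ≤ D := by
    intro i j
    have h1 : y 0 ≤ y i := hy.monotone (Fin.zero_le i)
    have h2 : y i ≤ y (Fin.last (n+1)) := hy.monotone (Fin.le_last i)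
    have h3 : y 0 ≤ y j := hy.monotone (Fin.zero_le j)
    have h4 : y j ≤ y (Fin.last (n+1)) := hy.monotone (Fin.le_last j)
    rw [abs_le]
    constructor <;> simp only [hDdef] <;> linarith
  have hrD : ∀ i, Real.log ((rballp p n y i)) ≤ c2 + Real.log D := by
    intro i
    obtain ⟨j, hij⟩ : ∃ j : Fin (n+2), j ≠ i := by
      rcases eq_or_ne i 0 with h | h
      · exact ⟨Fin.last (n+1), by rw [h]; exact ne_of_gt hlast0⟩
      · exact ⟨0, Ne.symm h⟩
    have h1 : (rballp p n y i) ≤ 2 ^ (1/p) * D :=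
      le_trans (rballp_le hp hy hij) (by nlinarith [hyD i j])
    have h2 := Real.log_le_log (hr i) h1
    rw [Real.log_mul (ne_of_gt h2p) (ne_of_gt hD), hlog2p] at h2
    linarith
  set Δ : ℝ := y i₀ - y (i₀ - 1) with hΔdef
  have hΔpos : 0 < Δ := gap_pos hy hi₀
  have hsub_ne : (i₀ - 1) ≠ i₀ := by
    intro h
    have h2 := fin_sub_one_val hi₀
    rw [h] at h2
    omega
  have hrΔ : Real.log ((rballp p n y i₀)) ≤ c2 + Real.log Δ := by
    have h1 : (rballp p n y i₀) ≤ 2 ^ (1/p) * Δ := by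
      have h2 := rballp_le hp hy hsub_ne
      rwa [abs_of_pos hΔpos] at h2
    have h2 := Real.log_le_log (hr i₀) h1
    rw [Real.log_mul (ne_of_gt h2p) (ne_of_gt hΔpos), hlog2p] at h2
    linarith
  have hΔD : Real.log Δ ≤ Real.log D := by
    apply Real.log_le_log hΔpos
    have h1 : y 0 ≤ y (i₀ - 1) := hy.monotone (Fin.zero_le _)
    have h2 : y i₀ ≤ y (Fin.last (n+1)) := hy.monotone (Fin.le_last _)
    simp only [hΔdef, hDdef]; linarith
  have hai₀A : a i₀ ≤ A := by
    rw [hAdef]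
    exact Finset.single_le_sum (fun j _ => (ha j).le) (Finset.mem_univ i₀)
  have hsum_alog : -(A*c2) - astar * Real.log Δ - (A - astar) * Real.log D
      ≤ ∑ i, -(a i * Real.log ((rballp p n y i))) := by
    have hsplit : ∑ i, -(a i * Real.log ((rballp p n y i)))
        = -(a i₀ * Real.log ((rballp p n y i₀)))
          + ∑ i ∈ Finset.univ.erase i₀, -(a i * Real.log ((rballp p n y i))) :=
      (Finset.add_sum_erase _ _ (Finset.mem_univ i₀)).symm
    have hterm : ∀ i ∈ Finset.univ.erase i₀,
        -(a i * (c2 + Real.log D)) ≤ -(a i * Real.log ((rballp p n y i))) := by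
      intro i _
      have h1 := mul_le_mul_of_nonneg_left (hrD i) (ha i).le
      linarith
    have hsum2 : ∑ i ∈ Finset.univ.erase i₀, -(a i * (c2 + Real.log D))
        ≤ ∑ i ∈ Finset.univ.erase i₀, -(a i * Real.log ((rballp p n y i))) := Finset.sum_le_sum hterm
    have hsum3 : ∑ i ∈ Finset.univ.erase i₀, -(a i * (c2 + Real.log D))
        = -((A - a i₀) * (c2 + Real.log D)) := by
      have : ∑ i ∈ Finset.univ.erase i₀, -(a i * (c2 + Real.log D))
          = -((∑ i ∈ Finset.univ.erase i₀, a i) * (c2 + Real.log D)) := by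
        rw [Finset.sum_mul]
        rw [← Finset.sum_neg_distrib]
      rw [this, Finset.sum_erase_eq_sub (Finset.mem_univ i₀)]
    have hmain : -(a i₀ * (c2 + Real.log Δ)) ≤ -(a i₀ * Real.log ((rballp p n y i₀))) := by
      have h1 := mul_le_mul_of_nonneg_left hrΔ (ha i₀).le
      linarith
    have hswap : -(a i₀ * c2) - astar * Real.log Δ - (a i₀ - astar) * Real.log D
        ≤ -(a i₀ * (c2 + Real.log Δ)) := by
      have h1 : (a i₀ - astar) * Real.log Δ ≤ (a i₀ - astar) * Real.log D :=
        mul_le_mul_of_nonneg_left hΔD (by linarith [hastar_le i₀])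
      nlinarith
    rw [hsplit]
    calc -(A*c2) - astar * Real.log Δ - (A - astar) * Real.log D
        = (-(a i₀ * c2) - astar * Real.log Δ - (a i₀ - astar) * Real.log D)
          + (-((A - a i₀) * (c2 + Real.log D))) := by ring
      _ ≤ -(a i₀ * (c2 + Real.log Δ))
          + ∑ i ∈ Finset.univ.erase i₀, -(a i * Real.log ((rballp p n y i))) := by
          rw [← hsum3]; exact add_le_add hswap hsum2
      _ ≤ _ := by exact add_le_add_left hmain _
  have hV1 : w 0 * V (y 0) + w (Fin.last (n+1)) * V (y (Fin.last (n+1))) + min mV 0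
      ≤ ∑ i, w i * V (y i) := by
    have hlast_ne : Fin.last (n+1) ∈ Finset.univ.erase (0 : Fin (n+2)) := by
      rw [Finset.mem_erase]; exact ⟨ne_of_gt hlast0, Finset.mem_univ _⟩
    have e1 : ∑ i, w i * V (y i)
        = w 0 * V (y 0) + ∑ i ∈ Finset.univ.erase 0, w i * V (y i) :=
      (Finset.add_sum_erase _ _ (Finset.mem_univ 0)).symm
    have e2 : ∑ i ∈ Finset.univ.erase 0, w i * V (y i)
        = w (Fin.last (n+1)) * V (y (Fin.last (n+1)))
          + ∑ i ∈ (Finset.univ.erase 0).erase (Fin.last (n+1)), w i * V (y i) :=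
      (Finset.add_sum_erase _ _ hlast_ne).symm
    set s := (Finset.univ.erase (0:Fin (n+2))).erase (Fin.last (n+1)) with hsdef
    have hσ1 : ∑ i ∈ s, w i ≤ 1 := by
      rw [← hw1]
      apply Finset.sum_le_sum_of_subset_of_nonneg
      · intro i hi; exact Finset.mem_univ i
      · intro i _ _; exact (hw i).le
    have hσ0 : 0 ≤ ∑ i ∈ s, w i := Finset.sum_nonneg (fun i _ => (hw i).le)
    have h3 : (∑ i ∈ s, w i) * mV ≤ ∑ i ∈ s, w i * V (y i) := by
      rw [Finset.sum_mul]
      exact Finset.sum_le_sum (fun i _ => mul_le_mul_of_nonneg_left (hmV (y i)) (hw i).le)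
    have h4 : min mV 0 ≤ (∑ i ∈ s, w i) * mV := by
      rcases le_or_gt 0 mV with h | h
      · calc min mV 0 ≤ 0 := min_le_right _ _
          _ ≤ _ := mul_nonneg hσ0 h
      · calc min mV 0 ≤ mV := min_le_left _ _
          _ ≤ _ := by nlinarith
    rw [e1, e2]; linarith
  have hG : (⨅ z : ℝ, (w 0 * V z + w (Fin.last (n+1)) * V (D + z)))
      ≤ w 0 * V (y 0) + w (Fin.last (n+1)) * V (y (Fin.last (n+1))) := by
    have hbdd : BddBelow (Set.range fun z : ℝ =>
        w 0 * V z + w (Fin.last (n+1)) * V (D + z)) := by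
      refine ⟨(w 0 + w (Fin.last (n+1))) * mV, ?_⟩
      rintro v ⟨z, rfl⟩
      dsimp only
      nlinarith [hmV z, hmV (D + z), hw 0, hw (Fin.last (n+1))]
    have h5 := ciInf_le hbdd (y 0)
    have heq : D + y 0 = y (Fin.last (n+1)) := by simp only [hDdef]; ring
    rwa [heq] at h5
  have hKD := hK D hD
  -- combine the interaction estimate with the entropy
  have hcomb : χ * (∑ i, (w i * (1 - w i)) * (Real.log ((rballp p n y i)) - c2))
      = (∑ i, -(a i * Real.log ((rballp p n y i)))) + (∑ i, w i * Real.log ((rballp p n y i)))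
        - χ * c2 * (∑ i, w i * (1 - w i)) := by
    rw [Finset.mul_sum, Finset.mul_sum, ← Finset.sum_add_distrib, ← Finset.sum_sub_distrib]
    apply Finset.sum_congr rfl
    intro i _
    simp only [hadef]
    ring
  have hB1 : ∑ i, w i * (1 - w i) ≤ 1 := by
    rw [← hw1]
    apply Finset.sum_le_sum
    intro i _
    nlinarith [hw i, hwle i]
  have hB0 : 0 ≤ ∑ i, w i * (1 - w i) :=
    Finset.sum_nonneg (fun i _ => mul_nonneg (hw i).le (by linarith [hwle i]))
  have hχI : χ * (∑ i, (w i * (1 - w i)) * (Real.log ((rballp p n y i)) - c2))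
      ≤ χ * ∑ i, ∑ j ∈ Finset.univ.erase i, w i * w j * Real.log |y i - y j| :=
    mul_le_mul_of_nonneg_left hI hχ0.le
  have hχc2B : χ * c2 * (∑ i, w i * (1 - w i)) ≤ χ * c2 := by
    nlinarith [mul_nonneg hχ0.le hc2]
  -- final assembly
  unfold kspEnergyV
  rw [hS]
  have hGK : K + (A - astar) * Real.log D
      ≤ (⨅ z : ℝ, (w 0 * V z + w (Fin.last (n+1)) * V (D + z))) := by linarith
  linarith [hsum_alog, hV1, hG, hGK, hχI, hcomb, hχc2B]


lemma eval_diff {n : ℕ} {z : Fin (n + 2) → ℝ} (k : Fin (n + 2)) :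
    DifferentiableAt ℝ (fun y : Fin (n + 2) → ℝ => y k) z :=
  (ContinuousLinearMap.proj (R := ℝ) (φ := fun _ : Fin (n + 2) => ℝ) k).differentiableAt

lemma rballp_diff {p : ℝ} (hp : 1 ≤ p) {n : ℕ} {z : Fin (n + 2) → ℝ}
    (hz : StrictMono z) (i : Fin (n + 2)) :
    DifferentiableAt ℝ (fun y : Fin (n + 2) → ℝ => rballp p n y i) z := by
  have hp0 : 0 < p := lt_of_lt_of_le one_pos hp
  by_cases h0 : i.val = 0
  · have he : (fun y : Fin (n + 2) → ℝ => rballp p n y i)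
        = fun y => (2 : ℝ) ^ (1 / p) * (y 1 - y 0) := by
      funext y; unfold rballp; rw [if_pos h0]
    rw [he]
    exact ((eval_diff 1).sub (eval_diff 0)).const_mul _
  · by_cases h1 : i.val = n + 1
    · have he : (fun y : Fin (n + 2) → ℝ => rballp p n y i)
          = fun y => (2 : ℝ) ^ (1 / p) * (y i - y (i - 1)) := by
        funext y; unfold rballp; rw [if_neg h0, if_pos h1]
      rw [he]
      exact ((eval_diff i).sub (eval_diff (i - 1))).const_mul _
    · have he : (fun y : Fin (n + 2) → ℝ => rballp p n y i)
          = fun y => (((y i - y (i - 1)) ^ (-p) + (y (i + 1) - y i) ^ (-p)) * (2:ℝ)⁻¹)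
              ^ (-1 / p) := by
        funext y; unfold rballp; rw [if_neg h0, if_neg h1, div_eq_mul_inv]
      rw [he]
      have hl : 0 < z i - z (i - 1) := gap_pos hz h0
      have hr : 0 < z (i + 1) - z i := sub_pos.mpr (hz (fin_lt_add_one h1))
      have d1 : DifferentiableAt ℝ (fun y : Fin (n + 2) → ℝ => (y i - y (i - 1)) ^ (-p)) z :=
        ((eval_diff i).sub (eval_diff (i - 1))).rpow_const (Or.inl hl.ne')
      have d2 : DifferentiableAt ℝ (fun y : Fin (n + 2) → ℝ => (y (i + 1) - y i) ^ (-p)) z :=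
        ((eval_diff (i + 1)).sub (eval_diff i)).rpow_const (Or.inl hr.ne')
      have hpos : ((z i - z (i - 1)) ^ (-p) + (z (i + 1) - z i) ^ (-p)) * (2:ℝ)⁻¹ ≠ 0 := by
        have hA : 0 < (z i - z (i - 1)) ^ (-p) := Real.rpow_pos_of_pos hl _
        have hB : 0 < (z (i + 1) - z i) ^ (-p) := Real.rpow_pos_of_pos hr _
        positivity
      exact ((d1.add d2).mul_const _).rpow_const (Or.inl hpos)

lemma energy_diff {p : ℝ} (hp : 1 ≤ p) {n : ℕ} (w : Fin (n + 2) → ℝ)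
    (hw : ∀ i, 0 < w i) {V : ℝ → ℝ} (hV : ContDiff ℝ 1 V) (χ : ℝ)
    {z : Fin (n + 2) → ℝ} (hz : StrictMono z) :
    DifferentiableAt ℝ (kspEnergyV p n w V χ) z := by
  have hVd : Differentiable ℝ V := hV.differentiable one_ne_zero
  have d1 : DifferentiableAt ℝ
      (fun y : Fin (n + 2) → ℝ => ∑ i, w i * Real.log (w i / rballp p n y i)) z := by
    apply DifferentiableAt.fun_sum
    intro i _
    have he2 : (fun y : Fin (n + 2) → ℝ => w i * Real.log (w i / rballp p n y i))
        = fun y => w i * Real.log (w i * (rballp p n y i)⁻¹) := by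
      funext y; rw [div_eq_mul_inv]
    rw [he2]
    have hdiv : DifferentiableAt ℝ
        (fun y : Fin (n + 2) → ℝ => w i * (rballp p n y i)⁻¹) z :=
      ((rballp_diff hp hz i).inv (rballp_pos hp hz i).ne').const_mul _
    have hne : w i * (rballp p n z i)⁻¹ ≠ 0 :=
      (mul_pos (hw i) (inv_pos.mpr (rballp_pos hp hz i))).ne'
    exact (hdiv.log hne).const_mul _
  have d2 : DifferentiableAt ℝ (fun y : Fin (n + 2) → ℝ => ∑ i, w i * V (y i)) z := by
    apply DifferentiableAt.fun_sum
    intro i _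
    exact ((hVd (z i)).comp z (eval_diff i)).const_mul _
  have d3 : DifferentiableAt ℝ (fun y : Fin (n + 2) → ℝ =>
      χ * ∑ i, ∑ j ∈ Finset.univ.erase i, w i * w j * Real.log |y i - y j|) z := by
    apply DifferentiableAt.const_mul
    apply DifferentiableAt.fun_sum
    intro i _
    apply DifferentiableAt.fun_sum
    intro j hj
    have hij : j ≠ i := (Finset.mem_erase.mp hj).1
    have he : (fun y : Fin (n + 2) → ℝ => w i * w j * Real.log |y i - y j|)
        = fun y => w i * w j * Real.log (y i - y j) := by
      funext y; rw [Real.log_abs]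
    rw [he]
    have hne : z i - z j ≠ 0 :=
      sub_ne_zero.mpr (fun h => hij (hz.injective h).symm)
    exact (((eval_diff i).sub (eval_diff j)).log hne).const_mul _
  exact (d1.add d2).add d3

lemma fderiv_apply_eq {n : ℕ} (L : (Fin (n + 2) → ℝ) →L[ℝ] ℝ) (v : Fin (n + 2) → ℝ) :
    L v = ∑ i, v i * L (Pi.single i 1) := by
  have hv : v = ∑ i, Pi.single i (v i) := (Finset.univ_sum_single v).symm
  conv_lhs => rw [hv]
  rw [map_sum]
  apply Finset.sum_congr rfl
  intro i _
  have hsingle : Pi.single i (v i)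
      = v i • (Pi.single (M := fun _ : Fin (n+2) => ℝ) i 1) := by
    funext j
    rcases eq_or_ne j i with h | h
    · subst h; simp
    · simp [Pi.single_apply, h]
  rw [hsingle, map_smul, smul_eq_mul]

lemma energy_antitone (p : ℝ) (hp : 1 ≤ p) (n : ℕ)
    (w : Fin (n + 2) → ℝ) (hw : ∀ i, 0 < w i)
    (χ : ℝ) (V : ℝ → ℝ) (hV : ContDiff ℝ 1 V)
    (T : ℝ≥0∞) (hT : 0 < T) (x : ℝ → Fin (n + 2) → ℝ)
    (hmem : ∀ t : ℝ, 0 ≤ t → ENNReal.ofReal t < T → StrictMono (x t))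
    (hflow : ∀ t : ℝ, 0 ≤ t → ENNReal.ofReal t < T → ∀ i : Fin (n + 2),
      HasDerivAt (fun s => x s i)
        (-(fderiv ℝ (kspEnergyV p n w V χ) (x t) (Pi.single i 1)) / w i) t)
    (t₀ : ℝ) (ht₀ : 0 ≤ t₀) (hTt₀ : ENNReal.ofReal t₀ < T) :
    kspEnergyV p n w V χ (x t₀) ≤ kspEnergyV p n w V χ (x 0) := by
  set E := kspEnergyV p n w V χ with hE
  set f : ℝ → ℝ := fun s => E (x s) with hf
  have hd : ∀ s ∈ Set.Icc (0:ℝ) t₀, HasDerivAt f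
      ((fderiv ℝ E (x s)) (fun i => -(fderiv ℝ E (x s) (Pi.single i 1)) / w i)) s := by
    intro s hs
    have hs0 : 0 ≤ s := hs.1
    have hsT : ENNReal.ofReal s < T := lt_of_le_of_lt (ENNReal.ofReal_le_ofReal hs.2) hTt₀
    have hdiff := energy_diff hp w hw hV χ (hmem s hs0 hsT)
    have hF : HasFDerivAt E (fderiv ℝ E (x s)) (x s) := hdiff.hasFDerivAt
    have hc : HasDerivAt (fun u => x u)
        (fun i => -(fderiv ℝ E (x s) (Pi.single i 1)) / w i) s :=
      hasDerivAt_pi.mpr (fun i => hflow s hs0 hsT i)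
    exact hF.comp_hasDerivAt s hc
  have hdnonpos : ∀ s ∈ Set.Icc (0:ℝ) t₀,
      (fderiv ℝ E (x s)) (fun i => -(fderiv ℝ E (x s) (Pi.single i 1)) / w i) ≤ 0 := by
    intro s _
    rw [fderiv_apply_eq]
    apply Finset.sum_nonpos
    intro i _
    have hwi := hw i
    set g := fderiv ℝ E (x s) (Pi.single i (1:ℝ)) with hg
    have : -g / w i * g = -(g ^ 2 / w i) := by ring
    rw [this]
    have : 0 ≤ g ^ 2 / w i := div_nonneg (sq_nonneg g) hwi.le
    linarith
  have hanti : AntitoneOn f (Set.Icc 0 t₀) := by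
    apply antitoneOn_of_deriv_nonpos (convex_Icc 0 t₀)
    · intro s hs
      exact ((hd s hs).continuousAt).continuousWithinAt
    · intro s hs
      rw [interior_Icc] at hs
      exact ((hd s (Set.mem_Icc_of_Ioo hs)).differentiableAt).differentiableWithinAt
    · intro s hs
      rw [interior_Icc] at hs
      rw [(hd s (Set.mem_Icc_of_Ioo hs)).deriv]
      exact hdnonpos s (Set.mem_Icc_of_Ioo hs)
  exact hanti (Set.left_mem_Icc.mpr ht₀) (Set.right_mem_Icc.mpr ht₀) ht₀

/-- let `p ≥ 1`, `0 < χ < 1`, `V` of class `C¹` and coercive with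
`x ↦ inf_y (w₁V(y) + w_N V(x+y)) − log|x|` coercive. Along any solution
`x : [0,T*) → U` of the confined `p`-approximated discrete Keller–Segel gradient flow
`wᵢ xᵢ' = −∂Ẽ_N^p/∂xᵢ`, the minimal inter-particle distance is bounded below by a
positive constant `δ` uniformly in time; in particular no two particles can collide. -/
theorem ksp_confined_no_collision (p : ℝ) (hp : 1 ≤ p) (n : ℕ)
    (w : Fin (n + 2) → ℝ) (hw : ∀ i, 0 < w i) (hw1 : ∑ i, w i = 1)
    (χ : ℝ) (hχ0 : 0 < χ) (hχ1 : χ < 1)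
    (V : ℝ → ℝ) (hV : ContDiff ℝ 1 V)
    (hVcoer : Tendsto V (cocompact ℝ) atTop)
    (hVW : Tendsto
      (fun t : ℝ => (⨅ y : ℝ, (w 0 * V y + w (Fin.last (n + 1)) * V (t + y))) -
        Real.log |t|) (cocompact ℝ) atTop)
    (T : ℝ≥0∞) (hT : 0 < T) (x : ℝ → Fin (n + 2) → ℝ)
    (hmem : ∀ t : ℝ, 0 ≤ t → ENNReal.ofReal t < T → StrictMono (x t))
    (hflow : ∀ t : ℝ, 0 ≤ t → ENNReal.ofReal t < T → ∀ i : Fin (n + 2),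
      HasDerivAt (fun s => x s i)
        (-(fderiv ℝ (kspEnergyV p n w V χ) (x t) (Pi.single i 1)) / w i) t) :
    ∃ δ > 0, ∀ t : ℝ, 0 ≤ t → ENNReal.ofReal t < T →
      ∀ i : Fin (n + 2), i.val ≠ 0 → δ ≤ x t i - x t (i - 1) := by
  have hVcont : Continuous V := hV.continuous
  obtain ⟨x₀, hx₀⟩ := hVcont.exists_forall_le hVcoer
  obtain ⟨a, C, ha, hlow⟩ := energy_lower p hp n w hw hw1 χ hχ0 hχ1 V (V x₀) hx₀ hVW
  have hE0 : ∀ t : ℝ, 0 ≤ t → ENNReal.ofReal t < T →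
      kspEnergyV p n w V χ (x t) ≤ kspEnergyV p n w V χ (x 0) := fun t h1 h2 =>
    energy_antitone p hp n w hw χ V hV T hT x hmem hflow t h1 h2
  refine ⟨Real.exp ((C - kspEnergyV p n w V χ (x 0)) / a), Real.exp_pos _, ?_⟩
  intro t ht hTt i hi
  have hy := hmem t ht hTt
  have hgap : 0 < x t i - x t (i - 1) := gap_pos hy hi
  have h1 := hlow (x t) hy i hi
  have h2 := hE0 t ht hTt
  have h3 : (C - kspEnergyV p n w V χ (x 0)) / a ≤ Real.log (x t i - x t (i - 1)) := by
    rw [div_le_iff₀ ha]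
    nlinarith
  calc Real.exp ((C - kspEnergyV p n w V χ (x 0)) / a)
      ≤ Real.exp (Real.log (x t i - x t (i - 1))) := Real.exp_le_exp.mpr h3
    _ = x t i - x t (i - 1) := Real.exp_log hgap
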